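/- Define Γ = ⋂_{x∈M} cl O⁺(x). (i) If Γ is a nonempty subset of M, then Γ is a closed invariant control set. (ii) If M is compact, positively invariant, and contains exactly one invariant control set C, then C = Γ; in particular C is closed. (iii) If a compact positively invariant set M contains two closed invariant control sets, then Γ is empty. -/

import Mathlib

open MeasureTheory Set Topology

/-- A control-affine system `ẋ = f₀(x) + ∑ vᵢ(t) fᵢ(x)` on `ℝ^d` with Lipschitz
continuous vector fields and compact control range `V ⊆ ℝ^m`.  The (unique, global)
solutions are bundled as the data `φ` together with their defining properties. -/
structure CAS (d m : ℕ) where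
  /-- the drift vector field -/
  f0 : (Fin d → ℝ) → (Fin d → ℝ)
  /-- the control vector fields -/
  f : Fin m → (Fin d → ℝ) → (Fin d → ℝ)
  /-- the control range -/
  V : Set (Fin m → ℝ)
  lip0 : ∃ K, LipschitzWith K f0
  lip : ∀ i, ∃ K, LipschitzWith K (f i)
  V_compact : IsCompact V
  /-- the solution map: `φ x v t` is the solution at time `t` starting at `x` with control `v` -/
  φ : (Fin d → ℝ) → (ℝ → (Fin m → ℝ)) → ℝ → (Fin d → ℝ)
  φ_init : ∀ x v, φ x v 0 = x
  φ_cont : ∀ x v, Continuous (φ x v)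
  /-- solutions are (Carathéodory) solutions of the ODE -/
  φ_sol : ∀ (x : Fin d → ℝ) (v : ℝ → (Fin m → ℝ)), Measurable v → (∀ t, v t ∈ V) →
    ∀ t, 0 ≤ t →
      φ x v t = x + ∫ s in (0:ℝ)..t, (f0 (φ x v s) + ∑ i, v s i • f (i) (φ x v s))

namespace CAS

variable {d m : ℕ}

/-- the set of admissible controls -/
def ctrl (S : CAS d m) : Set (ℝ → (Fin m → ℝ)) :=
  {v | Measurable v ∧ ∀ t, v t ∈ S.V}

/-- a control is piecewise constant if it has only finitely many discontinuities on
every bounded interval, i.e. it is constant between the members of a sequence of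
switching times tending to infinity -/
def PiecewiseConst (v : ℝ → (Fin m → ℝ)) : Prop :=
  ∃ τ : ℕ → ℝ, τ 0 = 0 ∧ StrictMono τ ∧ Filter.Tendsto τ Filter.atTop Filter.atTop ∧
    ∀ n, ∀ t ∈ Ico (τ n) (τ (n + 1)), v t = v (τ n)

/-- the reachable set from `x` -/
def reach (S : CAS d m) (x : Fin d → ℝ) : Set (Fin d → ℝ) :=
  {y | ∃ v ∈ S.ctrl, ∃ t ≥ (0:ℝ), S.φ x v t = y}

/-- the set reachable from `x` with piecewise constant controls -/
def reachPC (S : CAS d m) (x : Fin d → ℝ) : Set (Fin d → ℝ) :=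
  {y | ∃ v ∈ S.ctrl, PiecewiseConst v ∧ ∃ t ≥ (0:ℝ), S.φ x v t = y}

/-- the reachable set from `x` up to time `T` -/
def reachLe (S : CAS d m) (T : ℝ) (x : Fin d → ℝ) : Set (Fin d → ℝ) :=
  {y | ∃ v ∈ S.ctrl, ∃ t ∈ Icc (0:ℝ) T, S.φ x v t = y}

/-- the controllable set to `x` up to time `T` -/
def contrLe (S : CAS d m) (T : ℝ) (x : Fin d → ℝ) : Set (Fin d → ℝ) :=
  {y | ∃ v ∈ S.ctrl, ∃ t ∈ Icc (0:ℝ) T, S.φ y v t = x}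

/-- positive invariance of a set -/
def posInv (S : CAS d m) (M : Set (Fin d → ℝ)) : Prop :=
  ∀ x ∈ M, ∀ v ∈ S.ctrl, ∀ t ≥ (0:ℝ), S.φ x v t ∈ M

/-- invariance of a set -/
def inv (S : CAS d m) (M : Set (Fin d → ℝ)) : Prop :=
  ∀ t ≥ (0:ℝ), {y | ∃ x ∈ M, ∃ v ∈ S.ctrl, S.φ x v t = y} = M

/-- the two defining properties (i) controlled invariance and (ii) approximate
reachability of a control set -/
def controlSetProps (S : CAS d m) (D : Set (Fin d → ℝ)) : Prop :=
  (∀ x ∈ D, ∃ v ∈ S.ctrl, ∀ t ≥ (0:ℝ), S.φ x v t ∈ D) ∧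
  (∀ x ∈ D, D ⊆ closure (S.reach x))

/-- a control set: a maximal nonempty set with the properties `controlSetProps` -/
def isControlSet (S : CAS d m) (D : Set (Fin d → ℝ)) : Prop :=
  D.Nonempty ∧ S.controlSetProps D ∧
  ∀ D', D ⊆ D' → S.controlSetProps D' → D' = D

/-- an invariant control set -/
def isInvControlSet (S : CAS d m) (C : Set (Fin d → ℝ)) : Prop :=
  S.isControlSet C ∧ ∀ x ∈ C, closure C = closure (S.reach x)

/-- local accessibility at a point -/
def locAccAt (S : CAS d m) (x : Fin d → ℝ) : Prop :=
  ∀ T > (0:ℝ), ∀ N ∈ 𝓝 x,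
    (interior (S.reachLe T x) ∩ N).Nonempty ∧ (interior (S.contrLe T x) ∩ N).Nonempty

/-- local accessibility on a set -/
def locAccOn (S : CAS d m) (M : Set (Fin d → ℝ)) : Prop :=
  ∀ x ∈ M, S.locAccAt x

/-- the domain of attraction of a set -/
def domAttr (S : CAS d m) (C : Set (Fin d → ℝ)) : Set (Fin d → ℝ) :=
  {x | (closure (S.reach x) ∩ C).Nonempty}

/-- the strict domain of attraction of an invariant control set -/
def domAttrStrict (S : CAS d m) (C : Set (Fin d → ℝ)) : Set (Fin d → ℝ) :=
  {x | (closure (S.reach x) ∩ C).Nonempty ∧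
    ∀ C', S.isInvControlSet C' → (closure (S.reach x) ∩ C').Nonempty → C' = C}

end CAS

namespace CAS

variable {d m : ℕ}

/-- the right-hand side vector field of the system for a fixed control -/
def fld (S : CAS d m) (v : ℝ → Fin m → ℝ) (s : ℝ) (y : Fin d → ℝ) : Fin d → ℝ :=
  S.f0 y + ∑ i, v s i • S.f i y

lemma φ_sol' (S : CAS d m) {v : ℝ → Fin m → ℝ} (hv : v ∈ S.ctrl) (x : Fin d → ℝ)
    {t : ℝ} (ht : 0 ≤ t) :
    S.φ x v t = x + ∫ s in (0:ℝ)..t, S.fld v s (S.φ x v s) :=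
  S.φ_sol x v hv.1 hv.2 t ht

/-- a uniform bound on the control values -/
lemma exists_Vbound (S : CAS d m) : ∃ B : ℝ, 0 ≤ B ∧ ∀ u ∈ S.V, ∀ i, |u i| ≤ B := by
  obtain ⟨B, hB⟩ := S.V_compact.exists_bound_of_continuousOn continuousOn_id
  refine ⟨max B 0, le_max_right _ _, fun u hu i => ?_⟩
  calc |u i| = ‖u i‖ := rfl
    _ ≤ ‖u‖ := norm_le_pi_norm u i
    _ ≤ B := hB u hu
    _ ≤ max B 0 := le_max_left _ _

/-- a positive Lipschitz constant for the field, uniform over admissible controls -/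
lemma exists_lip (S : CAS d m) : ∃ L : ℝ, 0 < L ∧ ∀ v : ℝ → Fin m → ℝ, (∀ t, v t ∈ S.V) →
    ∀ s y z, ‖S.fld v s y - S.fld v s z‖ ≤ L * ‖y - z‖ := by
  obtain ⟨B, hB0, hB⟩ := S.exists_Vbound
  obtain ⟨K0, hK0⟩ := S.lip0
  choose K hK using S.lip
  refine ⟨(K0 : ℝ) + ∑ i, B * (K i : ℝ) + 1, by positivity, fun v hv s y z => ?_⟩
  have h0 : ‖S.f0 y - S.f0 z‖ ≤ (K0 : ℝ) * ‖y - z‖ := by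
    simpa [dist_eq_norm] using hK0.dist_le_mul y z
  have hi : ∀ i, ‖v s i • S.f i y - v s i • S.f i z‖ ≤ B * (K i : ℝ) * ‖y - z‖ := by
    intro i
    rw [← smul_sub, norm_smul]
    have h1 : ‖v s i‖ ≤ B := by simpa [Real.norm_eq_abs] using hB (v s) (hv s) i
    have h2 : ‖S.f i y - S.f i z‖ ≤ (K i : ℝ) * ‖y - z‖ := by
      simpa [dist_eq_norm] using (hK i).dist_le_mul y z
    calc ‖v s i‖ * ‖S.f i y - S.f i z‖ ≤ B * ((K i : ℝ) * ‖y - z‖) :=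
          mul_le_mul h1 h2 (norm_nonneg _) hB0
      _ = B * (K i : ℝ) * ‖y - z‖ := by ring
  calc ‖S.fld v s y - S.fld v s z‖
      = ‖(S.f0 y - S.f0 z) + ∑ i, (v s i • S.f i y - v s i • S.f i z)‖ := by
        simp only [fld]
        congr 1
        rw [Finset.sum_sub_distrib]
        abel
    _ ≤ ‖S.f0 y - S.f0 z‖ + ∑ i, ‖v s i • S.f i y - v s i • S.f i z‖ :=
        (norm_add_le _ _).trans (add_le_add_right (norm_sum_le _ _) _)
    _ ≤ (K0 : ℝ) * ‖y - z‖ + ∑ i, B * (K i : ℝ) * ‖y - z‖ :=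
        add_le_add h0 (Finset.sum_le_sum fun i _ => hi i)
    _ = ((K0 : ℝ) + ∑ i, B * (K i : ℝ)) * ‖y - z‖ := by rw [add_mul, Finset.sum_mul]
    _ ≤ ((K0 : ℝ) + ∑ i, B * (K i : ℝ) + 1) * ‖y - z‖ := by
        have : (0:ℝ) ≤ ‖y - z‖ := norm_nonneg _
        nlinarith

end CAS

namespace CAS

variable {d m : ℕ}

lemma fld_integrable (S : CAS d m) {v : ℝ → Fin m → ℝ} (hv : v ∈ S.ctrl)
    {γ : ℝ → Fin d → ℝ} (hγ : Continuous γ) (a b : ℝ) :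
    IntervalIntegrable (fun s => S.fld v s (γ s)) volume a b := by
  obtain ⟨B, hB0, hB⟩ := S.exists_Vbound
  obtain ⟨K0, hK0⟩ := S.lip0
  choose K hK using S.lip
  have hm : Measurable fun s => S.fld v s (γ s) := by
    apply Measurable.add
    · exact (hK0.continuous.comp hγ).measurable
    · exact Finset.measurable_sum _ fun i _ =>
        ((measurable_pi_apply i).comp hv.1).smul (((hK i).continuous.comp hγ).measurable)
  obtain ⟨C0, hC0⟩ := isCompact_uIcc.exists_bound_of_continuousOn
    ((hK0.continuous.comp hγ).continuousOn (s := uIcc a b))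
  have hCi : ∀ i : Fin m, ∃ C : ℝ, ∀ s ∈ uIcc a b, ‖S.f i (γ s)‖ ≤ C := fun i =>
    isCompact_uIcc.exists_bound_of_continuousOn (((hK i).continuous.comp hγ).continuousOn)
  choose C hC using hCi
  have hbound : ∀ s ∈ uIcc a b, ‖S.fld v s (γ s)‖ ≤ C0 + ∑ i, B * C i := by
    intro s hs
    calc ‖S.fld v s (γ s)‖ ≤ ‖S.f0 (γ s)‖ + ∑ i, ‖v s i • S.f i (γ s)‖ :=
          (norm_add_le _ _).trans (add_le_add_right (norm_sum_le _ _) _)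
      _ ≤ C0 + ∑ i, B * C i := by
          refine add_le_add (hC0 s hs) (Finset.sum_le_sum fun i _ => ?_)
          rw [norm_smul]
          have h1 : ‖v s i‖ ≤ B := by simpa [Real.norm_eq_abs] using hB (v s) (hv.2 s) i
          exact mul_le_mul h1 (hC i s hs) (norm_nonneg _) hB0
  rw [intervalIntegrable_iff]
  haveI : IsFiniteMeasure (volume.restrict (uIoc a b)) := by
    constructor
    rw [Measure.restrict_apply_univ]; unfold uIoc; rw [Real.volume_Ioc]
    exact ENNReal.ofReal_lt_top
  refine ⟨hm.aestronglyMeasurable.restrict, ?_⟩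
  apply MeasureTheory.HasFiniteIntegral.of_bounded (C := C0 + ∑ i, B * C i)
  filter_upwards [ae_restrict_mem measurableSet_uIoc] with s hs
  exact hbound s (uIoc_subset_uIcc hs)

/-- integral form of Grönwall's inequality -/
lemma gron_aux {L T δ : ℝ} (hL : 0 < L) (hδ : 0 ≤ δ) {g : ℝ → ℝ} (hg : Continuous g)
    (hg0 : ∀ s, 0 ≤ g s)
    (key : ∀ t ∈ Icc (0:ℝ) T, g t ≤ δ + ∫ s in (0:ℝ)..t, L * g s) :
    ∀ t ∈ Icc (0:ℝ) T, g t ≤ δ * Real.exp (L * t) := by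
  set h : ℝ → ℝ := fun t => ∫ s in (0:ℝ)..t, L * g s with hh
  have hder : ∀ t, HasDerivAt h (L * g t) t := fun t =>
    (Continuous.integral_hasStrictDerivAt (by fun_prop) 0 t).hasDerivAt
  have hcont : Continuous h := continuous_iff_continuousAt.2 fun t => (hder t).continuousAt
  have hpos : ∀ t ∈ Icc (0:ℝ) T, 0 ≤ h t := fun t ht =>
    intervalIntegral.integral_nonneg ht.1 (fun s _ => mul_nonneg hL.le (hg0 s))
  have main := norm_le_gronwallBound_of_norm_deriv_right_le (f := h)
    (f' := fun t => L * g t) (δ := 0) (K := L) (ε := L * δ) (a := 0) (b := T)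
    hcont.continuousOn (fun t _ => (hder t).hasDerivWithinAt)
    (by simp [hh, intervalIntegral.integral_same])
    (fun t ht => by
      have h1 := key t (Ico_subset_Icc_self ht)
      have h2 := hpos t (Ico_subset_Icc_self ht)
      rw [Real.norm_eq_abs, Real.norm_eq_abs, abs_of_nonneg h2,
        abs_of_nonneg (mul_nonneg hL.le (hg0 t))]
      nlinarith)
  intro t ht
  have h3 := main t ht
  rw [Real.norm_eq_abs, abs_of_nonneg (hpos t ht), gronwallBound_of_K_ne_0 hL.ne'] at h3
  have h4 := key t ht
  have h5 : L * δ / L = δ := by field_simp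
  rw [h5] at h3
  have := Real.exp_pos (L * t)
  simp only [sub_zero, zero_mul, zero_add] at h3
  nlinarith [key t ht]

/-- Grönwall comparison of two solutions of the integral equation with the same control -/
lemma gron_sol (S : CAS d m) {v : ℝ → Fin m → ℝ} (hv : v ∈ S.ctrl) {L : ℝ} (hL : 0 < L)
    (hlip : ∀ s y z, ‖S.fld v s y - S.fld v s z‖ ≤ L * ‖y - z‖)
    {α β : ℝ → Fin d → ℝ} (hαc : Continuous α) (hβc : Continuous β)
    {a b : Fin d → ℝ} {T : ℝ}
    (hα : ∀ t ∈ Icc (0:ℝ) T, α t = a + ∫ s in (0:ℝ)..t, S.fld v s (α s))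
    (hβ : ∀ t ∈ Icc (0:ℝ) T, β t = b + ∫ s in (0:ℝ)..t, S.fld v s (β s)) :
    ∀ t ∈ Icc (0:ℝ) T, ‖α t - β t‖ ≤ ‖a - b‖ * Real.exp (L * t) := by
  have key : ∀ t ∈ Icc (0:ℝ) T, ‖α t - β t‖ ≤ ‖a - b‖ + ∫ s in (0:ℝ)..t, L * ‖α s - β s‖ := by
    intro t ht
    have hiα := S.fld_integrable hv hαc 0 t
    have hiβ := S.fld_integrable hv hβc 0 t
    have heq : α t - β t
        = (a - b) + ∫ s in (0:ℝ)..t, (S.fld v s (α s) - S.fld v s (β s)) := by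
      rw [intervalIntegral.integral_sub hiα hiβ, hα t ht, hβ t ht]
      abel
    rw [heq]
    refine (norm_add_le _ _).trans (add_le_add_right ?_ _)
    calc ‖∫ s in (0:ℝ)..t, (S.fld v s (α s) - S.fld v s (β s))‖
        ≤ ∫ s in (0:ℝ)..t, ‖S.fld v s (α s) - S.fld v s (β s)‖ :=
          intervalIntegral.norm_integral_le_integral_norm ht.1
      _ ≤ ∫ s in (0:ℝ)..t, L * ‖α s - β s‖ := by
          refine intervalIntegral.integral_mono_on ht.1 (hiα.sub hiβ).norm
            (Continuous.intervalIntegrable (by fun_prop) 0 t) ?_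
          exact fun s _ => hlip s (α s) (β s)
  exact gron_aux hL (norm_nonneg _) (by fun_prop) (fun s => norm_nonneg _) key

end CAS

namespace CAS

variable {d m : ℕ}

/-- continuous dependence on initial conditions -/
lemma dist_le_of_ctrl (S : CAS d m) {v : ℝ → Fin m → ℝ} (hv : v ∈ S.ctrl) {L : ℝ} (hL : 0 < L)
    (hlip : ∀ s y z, ‖S.fld v s y - S.fld v s z‖ ≤ L * ‖y - z‖)
    (x y : Fin d → ℝ) {t : ℝ} (ht : 0 ≤ t) :
    ‖S.φ x v t - S.φ y v t‖ ≤ ‖x - y‖ * Real.exp (L * t) :=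
  gron_sol S hv hL hlip (S.φ_cont x v) (S.φ_cont y v)
    (fun s hs => S.φ_sol' hv x hs.1) (fun s hs => S.φ_sol' hv y hs.1) t ⟨ht, le_refl t⟩

/-- uniqueness: a continuous solution of the integral equation coincides with `φ` -/
lemma sol_unique (S : CAS d m) {v : ℝ → Fin m → ℝ} (hv : v ∈ S.ctrl)
    {α : ℝ → Fin d → ℝ} (hαc : Continuous α) {a : Fin d → ℝ} {T : ℝ}
    (hα : ∀ t ∈ Icc (0:ℝ) T, α t = a + ∫ s in (0:ℝ)..t, S.fld v s (α s)) :
    ∀ t ∈ Icc (0:ℝ) T, α t = S.φ a v t := by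
  obtain ⟨L, hL, hlip⟩ := S.exists_lip
  intro t ht
  have h := gron_sol S hv hL (hlip v hv.2) hαc (S.φ_cont a v) hα
    (fun s hs => S.φ_sol' hv a hs.1) t ht
  simpa [sub_self, sub_eq_zero] using h

lemma shift_mem_ctrl (S : CAS d m) {v : ℝ → Fin m → ℝ} (hv : v ∈ S.ctrl) (t : ℝ) :
    (fun u => v (u + t)) ∈ S.ctrl :=
  ⟨hv.1.comp (measurable_add_const t), fun s => hv.2 _⟩

/-- the cocycle property of the solution map -/
lemma cocycle (S : CAS d m) {v : ℝ → Fin m → ℝ} (hv : v ∈ S.ctrl) (x : Fin d → ℝ)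
    {t s : ℝ} (ht : 0 ≤ t) (hs : 0 ≤ s) :
    S.φ x v (t + s) = S.φ (S.φ x v t) (fun u => v (u + t)) s := by
  have hwc : (fun u => v (u + t)) ∈ S.ctrl := S.shift_mem_ctrl hv t
  have hαc : Continuous (fun u => S.φ x v (u + t)) :=
    (S.φ_cont x v).comp (continuous_add_right t)
  have h2 : S.φ x v t = x + ∫ r in (0:ℝ)..t, S.fld v r (S.φ x v r) := S.φ_sol' hv x ht
  have hψ : ∀ u ∈ Icc (0:ℝ) s, S.φ x v (u + t)
      = S.φ x v t + ∫ r in (0:ℝ)..u, S.fld (fun u' => v (u' + t)) r (S.φ x v (r + t)) := by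
    intro u hu
    have h1 : S.φ x v (u + t) = x + ∫ r in (0:ℝ)..(u + t), S.fld v r (S.φ x v r) :=
      S.φ_sol' hv x (by linarith [hu.1])
    have hsplit : (∫ r in (0:ℝ)..t, S.fld v r (S.φ x v r))
        + ∫ r in t..(u + t), S.fld v r (S.φ x v r)
        = ∫ r in (0:ℝ)..(u + t), S.fld v r (S.φ x v r) :=
      intervalIntegral.integral_add_adjacent_intervals
        (S.fld_integrable hv (S.φ_cont x v) 0 t) (S.fld_integrable hv (S.φ_cont x v) t (u + t))
    have h3 := intervalIntegral.integral_comp_add_right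
      (a := 0) (b := u) (fun r => S.fld v r (S.φ x v r)) t
    rw [zero_add] at h3
    calc S.φ x v (u + t) = x + ∫ r in (0:ℝ)..(u + t), S.fld v r (S.φ x v r) := h1
      _ = (x + ∫ r in (0:ℝ)..t, S.fld v r (S.φ x v r))
          + ∫ r in t..(u + t), S.fld v r (S.φ x v r) := by rw [← hsplit]; abel
      _ = S.φ x v t + ∫ r in t..(u + t), S.fld v r (S.φ x v r) := by rw [← h2]
      _ = S.φ x v t + ∫ r in (0:ℝ)..u, S.fld v (r + t) (S.φ x v (r + t)) := by rw [← h3]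
      _ = S.φ x v t + ∫ r in (0:ℝ)..u, S.fld (fun u' => v (u' + t)) r (S.φ x v (r + t)) := rfl
  have huniq := S.sol_unique hwc hαc (fun u hu => hψ u hu) s ⟨hs, le_refl s⟩
  rw [add_comm]
  exact huniq

/-- concatenation of two controls at time `t` -/
noncomputable def concat (v w : ℝ → Fin m → ℝ) (t : ℝ) : ℝ → Fin m → ℝ :=
  fun s => if s < t then v s else w (s - t)

lemma concat_mem_ctrl (S : CAS d m) {v w : ℝ → Fin m → ℝ} (hv : v ∈ S.ctrl) (hw : w ∈ S.ctrl)
    (t : ℝ) : concat v w t ∈ S.ctrl := by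
  constructor
  · exact Measurable.ite measurableSet_Iio hv.1 (hw.1.comp (measurable_sub_const t))
  · intro s
    by_cases h : s < t
    · simpa [concat, h] using hv.2 s
    · simpa [concat, h] using hw.2 (s - t)

lemma concat_eq_on (S : CAS d m) {v w : ℝ → Fin m → ℝ} (hv : v ∈ S.ctrl) (hw : w ∈ S.ctrl)
    {t : ℝ} (ht : 0 ≤ t) (x : Fin d → ℝ) :
    ∀ u ∈ Icc (0:ℝ) t, S.φ x (concat v w t) u = S.φ x v u := by
  have hc : concat v w t ∈ S.ctrl := S.concat_mem_ctrl hv hw t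
  have hne : ∀ᵐ r : ℝ ∂volume, r ≠ t := by
    rw [Filter.eventually_iff, mem_ae_iff]
    have : {r : ℝ | r ≠ t}ᶜ = {t} := by ext r; simp [not_not]
    rw [this]
    exact Real.volume_singleton
  have key : ∀ u ∈ Icc (0:ℝ) t,
      S.φ x (concat v w t) u = x + ∫ r in (0:ℝ)..u, S.fld v r (S.φ x (concat v w t) r) := by
    intro u hu
    rw [S.φ_sol' hc x hu.1]
    congr 1
    apply intervalIntegral.integral_congr_ae
    filter_upwards [hne] with r hr hrmem
    have hru : r ∈ Ioc (0:ℝ) u := by rwa [uIoc_of_le hu.1] at hrmem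
    have hrt : r < t := lt_of_le_of_ne (hru.2.trans hu.2) hr
    simp only [fld, concat, if_pos hrt]
  intro u hu
  exact S.sol_unique hv (S.φ_cont x (concat v w t)) key u hu

lemma concat_shift (S : CAS d m) {v w : ℝ → Fin m → ℝ} (hv : v ∈ S.ctrl) (hw : w ∈ S.ctrl)
    {t : ℝ} (ht : 0 ≤ t) (y : Fin d → ℝ) {s : ℝ} (hs : 0 ≤ s) :
    S.φ y (fun u => concat v w t (u + t)) s = S.φ y w s := by
  set c : ℝ → Fin m → ℝ := fun u => concat v w t (u + t) with hcdef
  have hc : c ∈ S.ctrl := S.shift_mem_ctrl (S.concat_mem_ctrl hv hw t) t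
  have hkey : ∀ u ∈ Icc (0:ℝ) s,
      S.φ y c u = y + ∫ r in (0:ℝ)..u, S.fld w r (S.φ y c r) := by
    intro u hu
    rw [S.φ_sol' hc y hu.1]
    congr 1
    apply intervalIntegral.integral_congr
    intro r hr
    have hr0 : 0 ≤ r := by
      rw [uIcc_of_le hu.1] at hr
      exact hr.1
    have : c r = w r := by
      simp only [hcdef, concat]
      rw [if_neg (by linarith), add_sub_cancel_right]
    simp only [fld, this]
  exact S.sol_unique hw (S.φ_cont y c) hkey s ⟨hs, le_refl s⟩

lemma φ_mem_reach (S : CAS d m) {v : ℝ → Fin m → ℝ} (hv : v ∈ S.ctrl) (x : Fin d → ℝ)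
    {t : ℝ} (ht : 0 ≤ t) : S.φ x v t ∈ S.reach x :=
  ⟨v, hv, t, ht, rfl⟩

lemma mem_reach_self (S : CAS d m) {v : ℝ → Fin m → ℝ} (hv : v ∈ S.ctrl) (x : Fin d → ℝ) :
    x ∈ S.reach x :=
  ⟨v, hv, 0, le_refl 0, S.φ_init x v⟩

lemma reach_trans (S : CAS d m) {x y : Fin d → ℝ} (h : y ∈ S.reach x) :
    S.reach y ⊆ S.reach x := by
  obtain ⟨v, hv, t, ht, rfl⟩ := h
  rintro z ⟨w, hw, s, hs, rfl⟩
  refine ⟨concat v w t, S.concat_mem_ctrl hv hw t, t + s, by linarith, ?_⟩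
  have h1 := S.cocycle (S.concat_mem_ctrl hv hw t) x ht hs
  rw [h1, S.concat_eq_on hv hw ht x t ⟨ht, le_refl t⟩, S.concat_shift hv hw ht _ hs]

lemma reach_subset_closure (S : CAS d m) {x y : Fin d → ℝ} (h : y ∈ closure (S.reach x)) :
    S.reach y ⊆ closure (S.reach x) := by
  rintro z ⟨w, hw, s, hs, rfl⟩
  obtain ⟨L, hL, hlip⟩ := S.exists_lip
  rw [Metric.mem_closure_iff]
  intro ε hε
  obtain ⟨y', hy', hd⟩ := Metric.mem_closure_iff.1 h (ε / Real.exp (L * s))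
    (by positivity)
  refine ⟨S.φ y' w s, S.reach_trans hy' (S.φ_mem_reach hw y' hs), ?_⟩
  have h1 : dist (S.φ y w s) (S.φ y' w s) ≤ dist y y' * Real.exp (L * s) := by
    rw [dist_eq_norm, dist_eq_norm]
    exact S.dist_le_of_ctrl hw hL (hlip w hw.2) y y' hs
  calc dist (S.φ y w s) (S.φ y' w s) ≤ dist y y' * Real.exp (L * s) := h1
    _ < (ε / Real.exp (L * s)) * Real.exp (L * s) := by
        have := Real.exp_pos (L * s)
        exact mul_lt_mul_of_pos_right hd this
    _ = ε := by field_simp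

lemma closure_reach_mono (S : CAS d m) {x y : Fin d → ℝ} (h : y ∈ closure (S.reach x)) :
    closure (S.reach y) ⊆ closure (S.reach x) :=
  closure_minimal (S.reach_subset_closure h) isClosed_closure

end CAS



/-- Let `Γ = ⋂_{x ∈ M} cl 𝒪⁺(x)`.
(i) If `Γ` is a nonempty subset of `M`, then `Γ` is a closed invariant control set.
(ii) If `M` is compact and positively invariant and contains exactly one invariant
control set `C`, then `C = Γ`; in particular `C` is closed.
(iii) If a compact positively invariant `M` contains two distinct closed invariant
control sets, then `Γ` is empty. -/
theorem stmt12 {d m : ℕ} (S : CAS d m) (M : Set (Fin d → ℝ)) :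
    ((⋂ x ∈ M, closure (S.reach x)).Nonempty → (⋂ x ∈ M, closure (S.reach x)) ⊆ M →
      IsClosed (⋂ x ∈ M, closure (S.reach x)) ∧
        S.isInvControlSet (⋂ x ∈ M, closure (S.reach x))) ∧
    (IsCompact M → S.posInv M →
      ∀ C, S.isInvControlSet C → C ⊆ M →
        (∀ C', S.isInvControlSet C' → C' ⊆ M → C' = C) →
        C = ⋂ x ∈ M, closure (S.reach x) ∧ IsClosed C) ∧
    (IsCompact M → S.posInv M →
      ∀ C₁ C₂, S.isInvControlSet C₁ → C₁ ⊆ M → IsClosed C₁ →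
        S.isInvControlSet C₂ → C₂ ⊆ M → IsClosed C₂ → C₁ ≠ C₂ →
        (⋂ x ∈ M, closure (S.reach x)) = ∅) := by
  set Γ : Set (Fin d → ℝ) := ⋂ x ∈ M, closure (S.reach x) with hΓ
  have hΓclosed : IsClosed Γ := isClosed_biInter fun x _ => isClosed_closure
  -- part (i)
  have part1 : Γ.Nonempty → Γ ⊆ M → IsClosed Γ ∧ S.isInvControlSet Γ := by
    intro hne hsub
    obtain ⟨g, hg⟩ := hne
    have hgM : g ∈ M := hsub hg
    have hreach_ne : (S.reach g).Nonempty :=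
      closure_nonempty_iff.1 ⟨g, mem_iInter₂.1 hg g hgM⟩
    obtain ⟨z, v0, hv0, -⟩ := hreach_ne
    have key : ∀ p ∈ Γ, closure (S.reach p) = Γ := by
      intro p hp
      apply Subset.antisymm
      · exact subset_iInter₂ fun z' hz' => S.closure_reach_mono (mem_iInter₂.1 hp z' hz')
      · exact iInter₂_subset p (hsub hp)
    refine ⟨hΓclosed, ⟨⟨⟨g, hg⟩, ⟨?_, ?_⟩, ?_⟩, ?_⟩⟩
    · -- controlled invariance
      intro p hp
      exact ⟨v0, hv0, fun t ht => (key p hp) ▸ subset_closure (S.φ_mem_reach hv0 p ht)⟩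
    · -- approximate reachability
      intro p hp
      exact (key p hp).ge
    · -- maximality
      intro D' hsub' hprops'
      refine Subset.antisymm ?_ hsub'
      intro q hq
      exact key g hg ▸ hprops'.2 g (hsub' hg) hq
    · -- invariant control set: closure Γ = closure (reach x)
      intro p hp
      rw [key p hp, hΓclosed.closure_eq]
  refine ⟨part1, ?_, ?_⟩
  · -- part (ii)
    intro hMcomp hMpos C hC hCM huniq
    obtain ⟨c0, hc0⟩ := hC.1.1
    obtain ⟨v0, hv0, -⟩ := hC.1.2.1.1 c0 hc0
    have hMclosed : IsClosed M := hMcomp.isClosed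
    have hreachM : ∀ x ∈ M, closure (S.reach x) ⊆ M := by
      intro x hx
      apply closure_minimal _ hMclosed
      rintro y ⟨v, hv, t, ht, rfl⟩
      exact hMpos x hx v hv t ht
    -- Step 1: C ⊆ closure (reach x) for every x ∈ M, via a Zorn minimality argument
    have hCsub : ∀ x ∈ M, C ⊆ closure (S.reach x) := by
      intro x hx
      have hRM : closure (S.reach x) ⊆ M := hreachM x hx
      set Fam : Set (Set (Fin d → ℝ)) :=
        {A | A.Nonempty ∧ IsClosed A ∧ A ⊆ closure (S.reach x) ∧
          ∀ y ∈ A, closure (S.reach y) ⊆ A} with hFam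
      have hRFam : closure (S.reach x) ∈ Fam :=
        ⟨⟨x, subset_closure (S.mem_reach_self hv0 x)⟩, isClosed_closure, subset_rfl,
          fun y hy => S.closure_reach_mono hy⟩
      have hchain : ∀ c ⊆ Fam, IsChain (· ⊆ ·) c → c.Nonempty →
          ∃ lb ∈ Fam, ∀ s ∈ c, lb ⊆ s := by
        intro c hcFam hchain hcne
        haveI : Nonempty c := hcne.to_subtype
        have hne' : (⋂₀ c).Nonempty := by
          apply IsCompact.nonempty_sInter_of_directed_nonempty_isCompact_isClosed
          · intro a ha b hb
            rcases hchain.total ha hb with h' | h'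
            · exact ⟨a, ha, subset_rfl, h'⟩
            · exact ⟨b, hb, h', subset_rfl⟩
          · exact fun U hU => (hcFam hU).1
          · exact fun U hU => hMcomp.of_isClosed_subset (hcFam hU).2.1
              ((hcFam hU).2.2.1.trans hRM)
          · exact fun U hU => (hcFam hU).2.1
        obtain ⟨U0, hU0⟩ := hcne
        refine ⟨⋂₀ c, ⟨hne', isClosed_sInter fun U hU => (hcFam hU).2.1,
          (sInter_subset_of_mem hU0).trans (hcFam hU0).2.2.1, ?_⟩,
          fun s hs => sInter_subset_of_mem hs⟩
        intro y hy
        exact subset_sInter fun U hU => (hcFam hU).2.2.2 y ((sInter_subset_of_mem hU) hy)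
      obtain ⟨A₀, hA₀R, hA₀Fam, hA₀min⟩ := zorn_superset_nonempty Fam hchain _ hRFam
      have keyA : ∀ y ∈ A₀, closure (S.reach y) = A₀ := by
        intro y hy
        have hmem : closure (S.reach y) ∈ Fam :=
          ⟨⟨y, subset_closure (S.mem_reach_self hv0 y)⟩, isClosed_closure,
            (hA₀Fam.2.2.2 y hy).trans hA₀Fam.2.2.1,
            fun z hz => S.closure_reach_mono hz⟩
        exact Subset.antisymm (hA₀Fam.2.2.2 y hy) (hA₀min hmem (hA₀Fam.2.2.2 y hy))
      obtain ⟨y₀, hy₀⟩ := hA₀Fam.1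
      have hA₀inv : S.isInvControlSet A₀ := by
        refine ⟨⟨hA₀Fam.1, ⟨?_, ?_⟩, ?_⟩, ?_⟩
        · intro p hp
          exact ⟨v0, hv0, fun t ht => (keyA p hp) ▸ subset_closure (S.φ_mem_reach hv0 p ht)⟩
        · intro p hp
          exact (keyA p hp).ge
        · intro D' hsub' hprops'
          refine Subset.antisymm ?_ hsub'
          exact (hprops'.2 y₀ (hsub' hy₀)).trans (keyA y₀ hy₀).subset
        · intro p hp
          rw [keyA p hp, hA₀Fam.2.1.closure_eq]
      have : A₀ = C := huniq A₀ hA₀inv (hA₀Fam.2.2.1.trans hRM)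
      rw [← this]
      exact hA₀R
    -- Step 2: Γ is an invariant control set contained in M, hence equals C
    have hΓne : Γ.Nonempty := ⟨c0, mem_iInter₂.2 fun x hx => hCsub x hx hc0⟩
    have hΓM : Γ ⊆ M := (iInter₂_subset c0 (hCM hc0)).trans (hreachM c0 (hCM hc0))
    obtain ⟨-, hΓinv⟩ := part1 hΓne hΓM
    have hΓC : Γ = C := huniq Γ hΓinv hΓM
    exact ⟨hΓC.symm, hΓC ▸ hΓclosed⟩
  · -- part (iii)
    intro hMcomp hMpos C₁ C₂ h1 h1M h1cl h2 h2M h2cl hCne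
    by_contra h
    obtain ⟨y, hy⟩ := nonempty_iff_ne_empty.2 h
    obtain ⟨a1, ha1⟩ := h1.1.1
    obtain ⟨a2, ha2⟩ := h2.1.1
    have hy1 : y ∈ C₁ := by
      have hmem := mem_iInter₂.1 hy a1 (h1M ha1)
      rwa [← h1.2 a1 ha1, h1cl.closure_eq] at hmem
    have hy2 : y ∈ C₂ := by
      have hmem := mem_iInter₂.1 hy a2 (h2M ha2)
      rwa [← h2.2 a2 ha2, h2cl.closure_eq] at hmem
    apply hCne
    calc C₁ = closure C₁ := h1cl.closure_eq.symm
      _ = closure (S.reach y) := h1.2 y hy1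
      _ = closure C₂ := (h2.2 y hy2).symm
      _ = C₂ := h2cl.closure_eq
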